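/- If a 1-bounded function f: Σ^n → ℂ satisfies |E_{x∼μ^⊗n}[f(x)·P(x)]| ≥ ε for some 1-bounded product function P, and μ = β·μ' + (1−β)·ν for distributions μ', ν on Σ, then with probability at least ε/2 over choosing I ⊆ [n] by including each coordinate independently with probability 1−β and z ∼ ν^⊗I, the restricted function satisfies |E_{x∼(μ')^⊗(complement of I)}[f_{I→z}(x)·P_{I→z}(x)]| ≥ ε/2. -/

import Mathlib

open Finset

lemma pairswap {α M : Type*} [Fintype α] [AddCommMonoid M]
    (e : α × α ≃ α × α) (F : α → α → M) :
    ∑ z, ∑ x, F z x = ∑ z, ∑ x, F (e (z, x)).1 (e (z, x)).2 := by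
  rw [← Fintype.sum_prod_type' (f := F),
    ← Equiv.sum_comp e (fun p => F p.1 p.2)]
  exact Fintype.sum_prod_type' (f := fun z x => F (e (z, x)).1 (e (z, x)).2)

def swapOut {Γ : Type} {n : ℕ} (I : Finset (Fin n)) :
    ((Fin n → Γ) × (Fin n → Γ)) ≃ ((Fin n → Γ) × (Fin n → Γ)) where
  toFun p := (fun i => if i ∈ I then p.1 i else p.2 i, fun i => if i ∈ I then p.2 i else p.1 i)
  invFun p := (fun i => if i ∈ I then p.1 i else p.2 i, fun i => if i ∈ I then p.2 i else p.1 i)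
  left_inv p := by ext i <;> by_cases h : i ∈ I <;> simp [h]
  right_inv p := by ext i <;> by_cases h : i ∈ I <;> simp [h]

lemma core {Γ : Type} [Fintype Γ] [DecidableEq Γ] [Nonempty Γ] {n : ℕ}
    (I : Finset (Fin n)) (ν' μ'' : Γ → ℂ) (F : (Fin n → Γ) → ℂ) :
    ∑ z : Fin n → Γ, ∑ x : Fin n → Γ,
      (∏ i, if i ∈ I then ν' (z i) else ((Fintype.card Γ : ℂ))⁻¹) *
      (∏ i, if i ∈ I then ((Fintype.card Γ : ℂ))⁻¹ else μ'' (x i)) *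
      F (fun i => if i ∈ I then z i else x i)
    = ∑ u : Fin n → Γ, (∏ i ∈ I, ν' (u i)) * (∏ i ∈ Iᶜ, μ'' (u i)) * F u := by
  have hcard : (Fintype.card Γ : ℂ) ≠ 0 := Nat.cast_ne_zero.mpr Fintype.card_ne_zero
  set c : ℂ := ((Fintype.card Γ : ℂ))⁻¹ with hc
  rw [pairswap (swapOut I) (fun z x =>
      (∏ i, if i ∈ I then ν' (z i) else c) *
      (∏ i, if i ∈ I then c else μ'' (x i)) *
      F (fun i => if i ∈ I then z i else x i))]
  have hstep : ∀ u v : Fin n → Γ,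
      (∏ i, if i ∈ I then ν' ((swapOut I (u, v)).1 i) else c) *
      (∏ i, if i ∈ I then c else μ'' ((swapOut I (u, v)).2 i)) *
      F (fun i => if i ∈ I then (swapOut I (u, v)).1 i else (swapOut I (u, v)).2 i)
      = (c ^ Iᶜ.card * c ^ I.card) *
        ((∏ i ∈ I, ν' (u i)) * (∏ i ∈ Iᶜ, μ'' (u i)) * F u) := by
    intro u v
    have h1 : (fun i => if i ∈ I then (swapOut I (u, v)).1 i else (swapOut I (u, v)).2 i) = u := by
      ext i; by_cases h : i ∈ I <;> simp [swapOut, h]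
    rw [h1]
    have h2 : (∏ i, if i ∈ I then ν' ((swapOut I (u, v)).1 i) else c)
        = (∏ i ∈ I, ν' (u i)) * c ^ Iᶜ.card := by
      rw [← Finset.prod_mul_prod_compl I]
      congr 1
      · exact Finset.prod_congr rfl fun i hi => by simp [swapOut, hi]
      · rw [← Finset.prod_const]
        exact Finset.prod_congr rfl fun i hi => by simp [swapOut, Finset.mem_compl.mp hi]
    have h3 : (∏ i, if i ∈ I then c else μ'' ((swapOut I (u, v)).2 i))
        = c ^ I.card * ∏ i ∈ Iᶜ, μ'' (u i) := by
      rw [← Finset.prod_mul_prod_compl I]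
      congr 1
      · rw [← Finset.prod_const]
        exact Finset.prod_congr rfl fun i hi => by simp [hi]
      · exact Finset.prod_congr rfl fun i hi => by simp [swapOut, Finset.mem_compl.mp hi]
    rw [h2, h3]; ring
  calc ∑ u : Fin n → Γ, ∑ v : Fin n → Γ,
        (∏ i, if i ∈ I then ν' ((swapOut I (u, v)).1 i) else c) *
        (∏ i, if i ∈ I then c else μ'' ((swapOut I (u, v)).2 i)) *
        F (fun i => if i ∈ I then (swapOut I (u, v)).1 i else (swapOut I (u, v)).2 i)
      = ∑ u : Fin n → Γ, ∑ _v : Fin n → Γ, (c ^ Iᶜ.card * c ^ I.card) *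
          ((∏ i ∈ I, ν' (u i)) * (∏ i ∈ Iᶜ, μ'' (u i)) * F u) := by
        exact Finset.sum_congr rfl fun u _ => Finset.sum_congr rfl fun v _ => hstep u v
    _ = ∑ u : Fin n → Γ, (∏ i ∈ I, ν' (u i)) * (∏ i ∈ Iᶜ, μ'' (u i)) * F u := by
        refine Finset.sum_congr rfl fun u _ => ?_
        rw [Finset.sum_const, Finset.card_univ, Fintype.card_fun, nsmul_eq_mul, ← mul_assoc]
        have h4 : ((Fintype.card Γ ^ Fintype.card (Fin n) : ℕ) : ℂ) *
            (c ^ Iᶜ.card * c ^ I.card) = 1 := by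
          rw [← pow_add, Finset.card_compl, Fintype.card_fin]
          have hle : I.card ≤ n := by simpa using Finset.card_le_univ I
          rw [Nat.sub_add_cancel hle]
          push_cast
          rw [hc, ← mul_pow, mul_inv_cancel₀ hcard, one_pow]
        rw [h4, one_mul]

lemma perI {Γ : Type} [Fintype Γ] [DecidableEq Γ] [Nonempty Γ] {n : ℕ}
    (I : Finset (Fin n)) (ν' μ'' : Γ → ℂ) (f : (Fin n → Γ) → ℂ) (P : Fin n → Γ → ℂ) :
    ∑ x : Fin n → Γ, ((∏ i ∈ I, ν' (x i)) * ∏ i ∈ Iᶜ, μ'' (x i)) * f x * ∏ i, P i (x i)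
    = ∑ z : Fin n → Γ,
        (∏ i, if i ∈ I then ν' (z i) else ((Fintype.card Γ : ℂ))⁻¹) * (∏ i ∈ I, P i (z i)) *
        ∑ x : Fin n → Γ,
          (∏ i, if i ∈ I then ((Fintype.card Γ : ℂ))⁻¹ else μ'' (x i)) *
          f (fun i => if i ∈ I then z i else x i) * ∏ i ∈ Iᶜ, P i (x i) := by
  set c : ℂ := ((Fintype.card Γ : ℂ))⁻¹ with hc
  rw [show (∑ x : Fin n → Γ, ((∏ i ∈ I, ν' (x i)) * ∏ i ∈ Iᶜ, μ'' (x i)) * f x * ∏ i, P i (x i))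
      = ∑ u : Fin n → Γ, (∏ i ∈ I, ν' (u i)) * (∏ i ∈ Iᶜ, μ'' (u i)) *
        (f u * (∏ i ∈ Iᶜ, P i (u i)) * ∏ i ∈ I, P i (u i)) from
    Finset.sum_congr rfl fun u _ => by
      have hsplit : (∏ i, P i (u i)) = (∏ i ∈ I, P i (u i)) * ∏ i ∈ Iᶜ, P i (u i) :=
        (Finset.prod_mul_prod_compl I _).symm
      rw [hsplit]; ring]
  rw [← core I ν' μ'' (fun u => f u * (∏ i ∈ Iᶜ, P i (u i)) * ∏ i ∈ I, P i (u i))]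
  refine Finset.sum_congr rfl fun z _ => ?_
  rw [Finset.mul_sum]
  refine Finset.sum_congr rfl fun x _ => ?_
  have hPc : (∏ i ∈ Iᶜ, P i ((fun j => if j ∈ I then z j else x j) i)) = ∏ i ∈ Iᶜ, P i (x i) :=
    Finset.prod_congr rfl fun i hi => by simp [Finset.mem_compl.mp hi]
  have hPI : (∏ i ∈ I, P i ((fun j => if j ∈ I then z j else x j) i)) = ∏ i ∈ I, P i (z i) :=
    Finset.prod_congr rfl fun i hi => by simp [hi]
  rw [hPc, hPI]; ring

lemma main_eq {Γ : Type} [Fintype Γ] [DecidableEq Γ] [Nonempty Γ] {n : ℕ} (β : ℝ)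
    (μ μ' ν : Γ → ℝ) (hmix : ∀ a, μ a = β * μ' a + (1 - β) * ν a)
    (f : (Fin n → Γ) → ℂ) (P : Fin n → Γ → ℂ) :
    (∑ x : Fin n → Γ, ((∏ i, μ (x i) : ℝ) : ℂ) * f x * ∏ i, P i (x i))
    = ∑ I : Finset (Fin n), ∑ z : Fin n → Γ,
        ((((1 - β) ^ I.card * β ^ (n - I.card)) *
          (∏ i, if i ∈ I then ν (z i) else ((Fintype.card Γ : ℝ))⁻¹) : ℝ) : ℂ) *
        (∏ i ∈ I, P i (z i)) *
        ∑ x : Fin n → Γ,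
          ((∏ i, if i ∈ I then ((Fintype.card Γ : ℝ))⁻¹ else μ' (x i) : ℝ) : ℂ) *
          f (fun i => if i ∈ I then z i else x i) * ∏ i ∈ Iᶜ, P i (x i) := by
  have hprod : ∀ x : Fin n → Γ, ((∏ i, μ (x i) : ℝ) : ℂ)
      = ∑ I : Finset (Fin n),
        (∏ i ∈ I, ((1 - (β : ℂ)) * (ν (x i) : ℂ))) *
        ∏ i ∈ Iᶜ, ((β : ℂ) * (μ' (x i) : ℂ)) := by
    intro x
    push_cast
    rw [show (∏ i, (μ (x i) : ℂ))
        = ∏ i, ((1 - (β : ℂ)) * (ν (x i) : ℂ) + (β : ℂ) * (μ' (x i) : ℂ)) from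
      Finset.prod_congr rfl fun i _ => by rw [hmix]; push_cast; ring]
    exact Fintype.prod_add (fun i => (1 - (β : ℂ)) * (ν (x i) : ℂ))
      (fun i => (β : ℂ) * (μ' (x i) : ℂ))
  calc (∑ x : Fin n → Γ, ((∏ i, μ (x i) : ℝ) : ℂ) * f x * ∏ i, P i (x i))
      = ∑ x : Fin n → Γ, ∑ I : Finset (Fin n),
          ((∏ i ∈ I, ((1 - (β : ℂ)) * (ν (x i) : ℂ))) *
           ∏ i ∈ Iᶜ, ((β : ℂ) * (μ' (x i) : ℂ))) * f x * ∏ i, P i (x i) := by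
        refine Finset.sum_congr rfl fun x _ => ?_
        rw [hprod x, Finset.sum_mul, Finset.sum_mul]
    _ = ∑ I : Finset (Fin n), ∑ x : Fin n → Γ,
          ((∏ i ∈ I, ((1 - (β : ℂ)) * (ν (x i) : ℂ))) *
           ∏ i ∈ Iᶜ, ((β : ℂ) * (μ' (x i) : ℂ))) * f x * ∏ i, P i (x i) := by
        exact Finset.sum_comm (f := fun (x : Fin n → Γ) (I : Finset (Fin n)) =>
          ((∏ i ∈ I, ((1 - (β : ℂ)) * (ν (x i) : ℂ))) *
           ∏ i ∈ Iᶜ, ((β : ℂ) * (μ' (x i) : ℂ))) * f x * ∏ i, P i (x i))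
    _ = _ := by
        refine Finset.sum_congr rfl fun I _ => ?_
        have hconst : ∀ x : Fin n → Γ,
            ((∏ i ∈ I, ((1 - (β : ℂ)) * (ν (x i) : ℂ))) *
             ∏ i ∈ Iᶜ, ((β : ℂ) * (μ' (x i) : ℂ)))
            = ((1 - (β : ℂ)) ^ I.card * (β : ℂ) ^ (n - I.card)) *
              ((∏ i ∈ I, (ν (x i) : ℂ)) * ∏ i ∈ Iᶜ, (μ' (x i) : ℂ)) := by
          intro x
          rw [Finset.prod_mul_distrib, Finset.prod_mul_distrib, Finset.prod_const,
            Finset.prod_const, Finset.card_compl, Fintype.card_fin]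
          ring
        rw [show (∑ x : Fin n → Γ,
            ((∏ i ∈ I, ((1 - (β : ℂ)) * (ν (x i) : ℂ))) *
             ∏ i ∈ Iᶜ, ((β : ℂ) * (μ' (x i) : ℂ))) * f x * ∏ i, P i (x i))
          = ((1 - (β : ℂ)) ^ I.card * (β : ℂ) ^ (n - I.card)) *
            ∑ x : Fin n → Γ, ((∏ i ∈ I, (ν (x i) : ℂ)) * ∏ i ∈ Iᶜ, (μ' (x i) : ℂ)) *
              f x * ∏ i, P i (x i) from by
          rw [Finset.mul_sum]
          exact Finset.sum_congr rfl fun x _ => by rw [hconst x]; ring]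
        rw [perI I (fun a => (ν a : ℂ)) (fun a => (μ' a : ℂ)) f P, Finset.mul_sum]
        refine Finset.sum_congr rfl fun z _ => ?_
        have e1 : ((((1 - β) ^ I.card * β ^ (n - I.card)) *
            (∏ i, if i ∈ I then ν (z i) else ((Fintype.card Γ : ℝ))⁻¹) : ℝ) : ℂ)
            = ((1 - (β : ℂ)) ^ I.card * (β : ℂ) ^ (n - I.card)) *
              ∏ i, if i ∈ I then (ν (z i) : ℂ) else ((Fintype.card Γ : ℂ))⁻¹ := by
          push_cast [apply_ite Complex.ofReal]
          ring
        have e2 : ∀ x : Fin n → Γ,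
            ((∏ i, if i ∈ I then ((Fintype.card Γ : ℝ))⁻¹ else μ' (x i) : ℝ) : ℂ)
            = ∏ i, if i ∈ I then ((Fintype.card Γ : ℂ))⁻¹ else (μ' (x i) : ℂ) := by
          intro x; push_cast [apply_ite Complex.ofReal]; ring
        rw [e1]
        rw [show (∑ x : Fin n → Γ,
            ((∏ i, if i ∈ I then ((Fintype.card Γ : ℝ))⁻¹ else μ' (x i) : ℝ) : ℂ) *
            f (fun i => if i ∈ I then z i else x i) * ∏ i ∈ Iᶜ, P i (x i))
          = ∑ x : Fin n → Γ,
            (∏ i, if i ∈ I then ((Fintype.card Γ : ℂ))⁻¹ else (μ' (x i) : ℂ)) *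
            f (fun i => if i ∈ I then z i else x i) * ∏ i ∈ Iᶜ, P i (x i) from
          Finset.sum_congr rfl fun x _ => by rw [e2 x]]
        ring

/-- if a 1-bounded f correlates (≥ ε) with a 1-bounded product function P
under μ^⊗n, and μ = β·μ' + (1−β)·ν, then with probability at least ε/2 over the random
restriction (I ∼_{1−β} [n], z ∼ ν^⊗I), the restricted function f_{I→z} correlates (≥ ε/2)
with P_{I→z} under (μ')^⊗Iᶜ. -/
theorem stmt2 {Γ : Type} [Fintype Γ] [DecidableEq Γ] [Nonempty Γ]
    (n : ℕ) (β ε : ℝ) (hβ0 : 0 ≤ β) (hβ1 : β ≤ 1) (hε : 0 < ε)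
    (μ μ' ν : Γ → ℝ)
    (hμ'0 : ∀ a, 0 ≤ μ' a) (hμ'1 : ∑ a, μ' a = 1)
    (hν0 : ∀ a, 0 ≤ ν a) (hν1 : ∑ a, ν a = 1)
    (hmix : ∀ a, μ a = β * μ' a + (1 - β) * ν a)
    (f : (Fin n → Γ) → ℂ) (hf : ∀ x, norm (f x) ≤ 1)
    (P : Fin n → Γ → ℂ) (hP : ∀ i a, norm (P i a) ≤ 1)
    (hcorr : ε ≤ norm (∑ x : Fin n → Γ,
      ((∏ i, μ (x i) : ℝ) : ℂ) * f x * ∏ i, P i (x i))) :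
    ε / 2 ≤ ∑ I : Finset (Fin n), ∑ z : Fin n → Γ,
      ((1 - β) ^ I.card * β ^ (n - I.card)) *
        (∏ i, if i ∈ I then ν (z i) else ((Fintype.card Γ : ℝ))⁻¹) *
        (if ε / 2 ≤ norm (∑ x : Fin n → Γ,
            ((∏ i, if i ∈ I then ((Fintype.card Γ : ℝ))⁻¹ else μ' (x i) : ℝ) : ℂ) *
              f (fun i => if i ∈ I then z i else x i) *
              ∏ i ∈ Iᶜ, P i (x i))
          then (1 : ℝ) else 0) := by
  have h1β : (0:ℝ) ≤ 1 - β := by linarith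
  have hcardpos : (0:ℝ) < (Fintype.card Γ : ℝ) := by
    exact_mod_cast Fintype.card_pos
  have hc0 : (0:ℝ) ≤ ((Fintype.card Γ : ℝ))⁻¹ := by positivity
  -- weights
  set w : Finset (Fin n) → (Fin n → Γ) → ℝ := fun I z =>
    ((1 - β) ^ I.card * β ^ (n - I.card)) *
      (∏ i, if i ∈ I then ν (z i) else ((Fintype.card Γ : ℝ))⁻¹) with hw
  set T : Finset (Fin n) → (Fin n → Γ) → ℂ := fun I z =>
    ∑ x : Fin n → Γ,
      ((∏ i, if i ∈ I then ((Fintype.card Γ : ℝ))⁻¹ else μ' (x i) : ℝ) : ℂ) *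
        f (fun i => if i ∈ I then z i else x i) *
        ∏ i ∈ Iᶜ, P i (x i) with hT
  have hw0 : ∀ I z, 0 ≤ w I z := by
    intro I z
    apply mul_nonneg (mul_nonneg (pow_nonneg h1β _) (pow_nonneg hβ0 _))
    apply Finset.prod_nonneg
    intro i _
    by_cases h : i ∈ I <;> simp [h, hν0, hc0]
  -- total weight is 1
  have hzsum : ∀ I : Finset (Fin n),
      (∑ z : Fin n → Γ, ∏ i, if i ∈ I then ν (z i) else ((Fintype.card Γ : ℝ))⁻¹) = 1 := by
    intro I
    rw [← Fintype.prod_sum (f := fun (i : Fin n) (a : Γ) =>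
      if i ∈ I then ν a else ((Fintype.card Γ : ℝ))⁻¹)]
    apply Finset.prod_eq_one
    intro i _
    by_cases h : i ∈ I
    · simp [h, hν1]
    · simp only [h, if_false, Finset.sum_const, Finset.card_univ, nsmul_eq_mul]
      field_simp
  have hIsum : (∑ I : Finset (Fin n), (1 - β) ^ I.card * β ^ (n - I.card)) = 1 := by
    have h := Fintype.prod_add (fun _ : Fin n => (1 - β)) (fun _ : Fin n => β)
    simp only [sub_add_cancel, Finset.prod_const, Finset.prod_const_one,
      Finset.card_compl, Fintype.card_fin, one_pow, Finset.card_univ] at h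
    rw [← h]
  have hwsum : (∑ I : Finset (Fin n), ∑ z : Fin n → Γ, w I z) = 1 := by
    rw [← hIsum]
    refine Finset.sum_congr rfl fun I _ => ?_
    rw [hw, ← Finset.mul_sum, hzsum I, mul_one]
  -- T is bounded by 1
  have hT1 : ∀ I z, norm (T I z) ≤ 1 := by
    intro I z
    have hterm : ∀ x : Fin n → Γ,
        norm (((∏ i, if i ∈ I then ((Fintype.card Γ : ℝ))⁻¹ else μ' (x i) : ℝ) : ℂ) *
          f (fun i => if i ∈ I then z i else x i) * ∏ i ∈ Iᶜ, P i (x i))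
        ≤ ∏ i, if i ∈ I then ((Fintype.card Γ : ℝ))⁻¹ else μ' (x i) := by
      intro x
      have hr : (0:ℝ) ≤ ∏ i, if i ∈ I then ((Fintype.card Γ : ℝ))⁻¹ else μ' (x i) := by
        apply Finset.prod_nonneg
        intro i _
        by_cases h : i ∈ I <;> simp [h, hμ'0, hc0]
      rw [norm_mul, norm_mul, Complex.norm_of_nonneg hr]
      have hPb : norm (∏ i ∈ Iᶜ, P i (x i)) ≤ 1 := by
        rw [norm_prod]
        exact Finset.prod_le_one (fun i _ => norm_nonneg _) (fun i _ => hP i _)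
      calc (∏ i, if i ∈ I then ((Fintype.card Γ : ℝ))⁻¹ else μ' (x i)) *
            norm (f fun i => if i ∈ I then z i else x i) *
            norm (∏ i ∈ Iᶜ, P i (x i))
          ≤ (∏ i, if i ∈ I then ((Fintype.card Γ : ℝ))⁻¹ else μ' (x i)) * 1 * 1 := by
            have hA := hf (fun i => if i ∈ I then z i else x i)
            have hA0 := norm_nonneg (f fun i => if i ∈ I then z i else x i)
            have hB0 := norm_nonneg (∏ i ∈ Iᶜ, P i (x i))
            have h1 := mul_le_of_le_one_right (mul_nonneg hr hA0) hPb
            have h2 := mul_le_of_le_one_right hr hA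
            linarith
        _ = _ := by ring
    calc norm (T I z) ≤ ∑ x : Fin n → Γ,
          norm (((∏ i, if i ∈ I then ((Fintype.card Γ : ℝ))⁻¹ else μ' (x i) : ℝ) : ℂ) *
            f (fun i => if i ∈ I then z i else x i) * ∏ i ∈ Iᶜ, P i (x i)) := by
          rw [hT]; exact norm_sum_le _ _
      _ ≤ ∑ x : Fin n → Γ, ∏ i, if i ∈ I then ((Fintype.card Γ : ℝ))⁻¹ else μ' (x i) :=
          Finset.sum_le_sum fun x _ => hterm x
      _ = 1 := by
          rw [← Fintype.prod_sum (f := fun (i : Fin n) (a : Γ) =>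
            if i ∈ I then ((Fintype.card Γ : ℝ))⁻¹ else μ' a)]
          apply Finset.prod_eq_one
          intro i _
          by_cases h : i ∈ I
          · simp only [h, if_true, Finset.sum_const, Finset.card_univ, nsmul_eq_mul]
            field_simp
          · simp [h, hμ'1]
  -- key inequality
  have hkey : ε ≤ ∑ I : Finset (Fin n), ∑ z : Fin n → Γ, w I z * norm (T I z) := by
    rw [main_eq β μ μ' ν hmix f P] at hcorr
    refine le_trans hcorr ?_
    calc norm (∑ I : Finset (Fin n), ∑ z : Fin n → Γ,
          ((((1 - β) ^ I.card * β ^ (n - I.card)) *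
            (∏ i, if i ∈ I then ν (z i) else ((Fintype.card Γ : ℝ))⁻¹) : ℝ) : ℂ) *
          (∏ i ∈ I, P i (z i)) * T I z)
        ≤ ∑ I : Finset (Fin n), ∑ z : Fin n → Γ, norm (
          ((((1 - β) ^ I.card * β ^ (n - I.card)) *
            (∏ i, if i ∈ I then ν (z i) else ((Fintype.card Γ : ℝ))⁻¹) : ℝ) : ℂ) *
          (∏ i ∈ I, P i (z i)) * T I z) := by
          refine le_trans (norm_sum_le _ _) ?_
          exact Finset.sum_le_sum fun I _ => norm_sum_le _ _
      _ ≤ ∑ I : Finset (Fin n), ∑ z : Fin n → Γ, w I z * norm (T I z) := by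
          refine Finset.sum_le_sum fun I _ => Finset.sum_le_sum fun z _ => ?_
          rw [norm_mul, norm_mul, Complex.norm_of_nonneg (hw0 I z)]
          have hQ : norm (∏ i ∈ I, P i (z i)) ≤ 1 := by
            rw [norm_prod]
            exact Finset.prod_le_one (fun i _ => norm_nonneg _) (fun i _ => hP i _)
          calc w I z * norm (∏ i ∈ I, P i (z i)) * norm (T I z)
              ≤ w I z * 1 * norm (T I z) := by
                gcongr
                exact hw0 I z
            _ = w I z * norm (T I z) := by ring
  -- Markov
  have hpt : ∀ I : Finset (Fin n), ∀ z : Fin n → Γ,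
      w I z * norm (T I z) ≤ w I z * (ε / 2) +
        w I z * (if ε / 2 ≤ norm (T I z) then (1:ℝ) else 0) := by
    intro I z
    by_cases h : ε / 2 ≤ norm (T I z)
    · rw [if_pos h]
      have := hT1 I z
      nlinarith [hw0 I z, hε]
    · rw [if_neg h]
      push_neg at h
      nlinarith [hw0 I z, hε]
  have hsum2 : ∑ I : Finset (Fin n), ∑ z : Fin n → Γ, w I z * norm (T I z)
      ≤ ε / 2 + ∑ I : Finset (Fin n), ∑ z : Fin n → Γ,
          w I z * (if ε / 2 ≤ norm (T I z) then (1:ℝ) else 0) := by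
    calc ∑ I : Finset (Fin n), ∑ z : Fin n → Γ, w I z * norm (T I z)
        ≤ ∑ I : Finset (Fin n), ∑ z : Fin n → Γ, (w I z * (ε / 2) +
            w I z * (if ε / 2 ≤ norm (T I z) then (1:ℝ) else 0)) :=
          Finset.sum_le_sum fun I _ => Finset.sum_le_sum fun z _ => hpt I z
      _ = (∑ I : Finset (Fin n), ∑ z : Fin n → Γ, w I z * (ε / 2)) +
          ∑ I : Finset (Fin n), ∑ z : Fin n → Γ,
            w I z * (if ε / 2 ≤ norm (T I z) then (1:ℝ) else 0) := by
          rw [← Finset.sum_add_distrib]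
          exact Finset.sum_congr rfl fun I _ => Finset.sum_add_distrib
      _ = ε / 2 + ∑ I : Finset (Fin n), ∑ z : Fin n → Γ,
            w I z * (if ε / 2 ≤ norm (T I z) then (1:ℝ) else 0) := by
          congr 1
          have : (∑ I : Finset (Fin n), ∑ z : Fin n → Γ, w I z * (ε / 2))
              = (∑ I : Finset (Fin n), ∑ z : Fin n → Γ, w I z) * (ε / 2) := by
            rw [Finset.sum_mul]
            exact Finset.sum_congr rfl fun I _ => by rw [Finset.sum_mul]
          rw [this, hwsum, one_mul]
  have hfinal : ε / 2 ≤ ∑ I : Finset (Fin n), ∑ z : Fin n → Γ,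
      w I z * (if ε / 2 ≤ norm (T I z) then (1:ℝ) else 0) := by
    linarith
  calc ε / 2 ≤ ∑ I : Finset (Fin n), ∑ z : Fin n → Γ,
      w I z * (if ε / 2 ≤ norm (T I z) then (1:ℝ) else 0) := hfinal
    _ = _ := by
      refine Finset.sum_congr rfl fun I _ => Finset.sum_congr rfl fun z _ => ?_
      rw [hw, hT]
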